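/- Let Γ̃ be a label cover instance with left vertices Ũ = [m], and let I₁,…,I_k ⊆ [m] be an (m,k,ℓ,r,ε)-disperser. Construct the compressed instance Γ with left vertex set U = {I₁,…,I_k}, left alphabet Σ_U = Σ_{Ũ}^ℓ (partial assignments to each block), the same right side, edges Iv whenever some u ∈ I is adjacent to v in Γ̃, and constraints requiring consistency with all original constraints inside the block. If every labeling of Γ̃ covers fewer than (1-ε)m left vertices, then every labeling of Γ covers fewer than r left vertices (i.e., MaxCov(Γ̃) < (1-ε)|Ũ| implies MaxCov(Γ) < r). -/

import Mathlib

/-- soundness of the left-compression via a disperser: if the blocks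
I₁,…,I_k form an (m,k,ℓ,r,ε)-disperser and every labeling of the original label cover
instance covers fewer than (1-ε)m left vertices, then every labeling of the compressed
instance (whose left vertices are the blocks, a block i being covered when all original
constraints incident to vertices of I i are satisfied) covers fewer than r blocks. -/
theorem stmt_16 {V A B : Type*} (m k ℓ r : ℕ) (ε : ℝ) (hε0 : 0 < ε) (hε1 : ε < 1)
    (E : Fin m → V → Prop) (C : Fin m → V → Set (A × B))
    (I : Fin k → Finset (Fin m)) (hcard : ∀ i, (I i).card = ℓ)
    (hdisp : ∀ s : Finset (Fin k), s.card = r →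
      (1 - ε) * m ≤ ((s.biUnion I).card : ℝ))
    (hsound : ∀ (σ : Fin m → A) (τ : V → B),
      ((Nat.card {u : Fin m // ∀ v, E u v → (σ u, τ v) ∈ C u v}) : ℝ) < (1 - ε) * m) :
    ∀ (σU : Fin k → Fin m → A) (τ : V → B),
      Nat.card {i : Fin k // ∀ v, ∀ u ∈ I i, E u v → (σU i u, τ v) ∈ C u v} < r := by
  classical
  intro σU τ
  by_contra h
  push_neg at h
  -- case m = 0
  rcases Nat.eq_zero_or_pos m with hm | hm
  · subst hm
    have := hsound Fin.elim0 τ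
    simp at this
  rcases Nat.eq_zero_or_pos k with hk | hk
  · -- k = 0 : the subtype is empty, so r = 0, then hdisp ∅ gives contradiction
    subst hk
    have hcard0 : Nat.card {i : Fin 0 // ∀ v, ∀ u ∈ I i, E u v → (σU i u, τ v) ∈ C u v} = 0 := by
      simp
    rw [hcard0] at h
    have hr0 : r = 0 := Nat.le_zero.mp h
    have := hdisp ∅ (by simp [hr0])
    simp at this
    have : (0:ℝ) < (1 - ε) * m := by
      apply mul_pos (by linarith) (by exact_mod_cast hm)
    linarith
  -- main case
  set P : Fin k → Prop := fun i => ∀ v, ∀ u ∈ I i, E u v → (σU i u, τ v) ∈ C u v with hP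
  have hcardP : Nat.card {i : Fin k // P i} = (Finset.univ.filter P).card := by
    rw [Nat.card_eq_fintype_card, Fintype.card_subtype]
  rw [hcardP] at h
  obtain ⟨s, hs_sub, hs_card⟩ := Finset.exists_subset_card_eq h
  set i₀ : Fin k := ⟨0, hk⟩
  set σ : Fin m → A := fun u =>
    if h : ∃ i, i ∈ s ∧ u ∈ I i then σU h.choose u else σU i₀ u with hσ
  have hcov : ∀ u ∈ s.biUnion I, ∀ v, E u v → (σ u, τ v) ∈ C u v := by
    intro u hu v hEv
    rw [Finset.mem_biUnion] at hu
    obtain ⟨i, his, hui⟩ := hu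
    have hex : ∃ i, i ∈ s ∧ u ∈ I i := ⟨i, his, hui⟩
    have hspec := hex.choose_spec
    have hPi : P hex.choose := by
      have := hs_sub hspec.1
      simpa [P] using (Finset.mem_filter.mp this).2
    have : σ u = σU hex.choose u := by simp [hσ, hex]
    rw [this]
    exact hPi v u hspec.2 hEv
  have hsub : s.biUnion I ⊆ Finset.univ.filter
      (fun u => ∀ v, E u v → (σ u, τ v) ∈ C u v) := by
    intro u hu
    exact Finset.mem_filter.mpr ⟨Finset.mem_univ u, hcov u hu⟩
  have hle : ((s.biUnion I).card : ℝ) ≤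
      Nat.card {u : Fin m // ∀ v, E u v → (σ u, τ v) ∈ C u v} := by
    rw [Nat.card_eq_fintype_card, Fintype.card_subtype]
    exact_mod_cast Finset.card_le_card hsub
  have h1 := hdisp s hs_card
  have h2 := hsound σ τ
  linarith
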